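/- Let (τ_n) be the transverse Markov trace on the Hecke algebras with generic parameters {α_n}, and define e(P_1α_1 + P_2α_2 + ⋯) = min{−deg_a(P_k) − k : P_k ≠ 0}. Then for every braid β on n strands with image u in H_n, one has e(τ_n(u)) ≥ −n. -/

import Mathlib

noncomputable section

/-- Defining relations of the Hecke algebra with `n` generators
(the paper's `H_{n+1}`), over a commutative ring `C` with quadratic
parameter `z` (in the paper `z = q - q⁻¹`). -/
inductive HeckeRel (C : Type) [CommRing C] (z : C) (n : ℕ) :
    FreeAlgebra C (Fin n) → FreeAlgebra C (Fin n) → Prop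
  | comm (i j : Fin n) (h : (i : ℕ) + 2 ≤ (j : ℕ)) :
      HeckeRel C z n (FreeAlgebra.ι C i * FreeAlgebra.ι C j)
        (FreeAlgebra.ι C j * FreeAlgebra.ι C i)
  | braid (i j : Fin n) (h : (j : ℕ) = (i : ℕ) + 1) :
      HeckeRel C z n (FreeAlgebra.ι C i * FreeAlgebra.ι C j * FreeAlgebra.ι C i)
        (FreeAlgebra.ι C j * FreeAlgebra.ι C i * FreeAlgebra.ι C j)
  | quad (i : Fin n) :
      HeckeRel C z n (FreeAlgebra.ι C i * FreeAlgebra.ι C i)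
        (1 + z • FreeAlgebra.ι C i)

/-- The Hecke algebra with `n` generators `σ_1, …, σ_n` (the paper's `H_{n+1}`). -/
abbrev Hecke (C : Type) [CommRing C] (z : C) (n : ℕ) : Type :=
  RingQuot (HeckeRel C z n)

variable {C : Type} [CommRing C] {z : C} {n : ℕ}

/-- The generator `σ_{i+1}` of the Hecke algebra. -/
def Hecke.σ (i : Fin n) : Hecke C z n :=
  RingQuot.mkAlgHom C (HeckeRel C z n) (FreeAlgebra.ι C i)

lemma Hecke.σ_comm (i j : Fin n) (h : (i : ℕ) + 2 ≤ (j : ℕ)) :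
    Hecke.σ (z := z) i * Hecke.σ j = Hecke.σ j * Hecke.σ i := by
  have := RingQuot.mkAlgHom_rel C (HeckeRel.comm (C := C) (z := z) i j h)
  simp only [map_mul] at this
  exact this

lemma Hecke.σ_braid (i j : Fin n) (h : (j : ℕ) = (i : ℕ) + 1) :
    Hecke.σ (z := z) i * Hecke.σ j * Hecke.σ i = Hecke.σ j * Hecke.σ i * Hecke.σ j := by
  have := RingQuot.mkAlgHom_rel C (HeckeRel.braid (C := C) (z := z) i j h)
  simp only [map_mul] at this
  exact this

lemma Hecke.σ_quad (i : Fin n) :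
    Hecke.σ (z := z) i * Hecke.σ i = 1 + z • Hecke.σ i := by
  have := RingQuot.mkAlgHom_rel C (HeckeRel.quad (C := C) (z := z) i)
  simp only [map_mul, map_add, map_one, map_smul] at this
  exact this

lemma Hecke.σ_mul_inv (i : Fin n) :
    Hecke.σ (z := z) i * (Hecke.σ i - z • 1) = 1 := by
  rw [mul_sub, Hecke.σ_quad, mul_smul_comm, mul_one]; abel

lemma Hecke.inv_mul_σ (i : Fin n) :
    (Hecke.σ (z := z) i - z • 1) * Hecke.σ i = 1 := by
  rw [sub_mul, Hecke.σ_quad, smul_mul_assoc, one_mul]; abel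

/-- The generator `σ_{i+1}` as a unit. -/
def Hecke.σU (i : Fin n) : (Hecke C z n)ˣ :=
  ⟨Hecke.σ i, Hecke.σ i - z • 1, Hecke.σ_mul_inv i, Hecke.inv_mul_σ i⟩

/-- The natural embedding `H_{m+1} → H_{n+1}` (`ι` iterated). -/
def Hecke.ιle {m n : ℕ} (h : m ≤ n) : Hecke C z m →ₐ[C] Hecke C z n :=
  RingQuot.liftAlgHom C ⟨FreeAlgebra.lift C (fun i => Hecke.σ (Fin.castLE h i)), by
    rintro x y hxy
    induction hxy with
    | comm i j hij =>
        simp only [map_mul, FreeAlgebra.lift_ι_apply]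
        exact Hecke.σ_comm _ _ (by simpa using hij)
    | braid i j hij =>
        simp only [map_mul, FreeAlgebra.lift_ι_apply]
        exact Hecke.σ_braid _ _ (by simpa using hij)
    | quad i =>
        simp only [map_mul, map_add, map_one, map_smul, FreeAlgebra.lift_ι_apply]
        exact Hecke.σ_quad _⟩

/-- The shift morphism `sh^m : H_{l+1} → H_{l+m+1}`, sending `σ_i` to `σ_{i+m}`. -/
def Hecke.shift (m : ℕ) {l : ℕ} : Hecke C z l →ₐ[C] Hecke C z (m + l) :=
  RingQuot.liftAlgHom C ⟨FreeAlgebra.lift C (fun i => Hecke.σ (Fin.natAdd m i)), by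
    rintro x y hxy
    induction hxy with
    | comm i j hij =>
        simp only [map_mul, FreeAlgebra.lift_ι_apply]
        exact Hecke.σ_comm _ _ (by simp [Fin.natAdd]; omega)
    | braid i j hij =>
        simp only [map_mul, FreeAlgebra.lift_ι_apply]
        exact Hecke.σ_braid _ _ (by simp [Fin.natAdd]; omega)
    | quad i =>
        simp only [map_mul, map_add, map_one, map_smul, FreeAlgebra.lift_ι_apply]
        exact Hecke.σ_quad _⟩



/-! ### Auxiliary development -/

section Aux

variable {C : Type} [CommRing C] {z : C} {n : ℕ}

lemma Hecke.hom_ext {A : Type} [Semiring A] [Algebra C A] {f g : Hecke C z n →ₐ[C] A}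
    (h : ∀ i, f (Hecke.σ (z := z) i) = g (Hecke.σ i)) : f = g := by
  apply RingQuot.ringQuot_ext'
  apply FreeAlgebra.hom_ext
  funext i
  simpa [Hecke.σ] using h i

lemma Hecke.ιle_σ {m : ℕ} (h : m ≤ n) (i : Fin m) :
    Hecke.ιle (z := z) h (Hecke.σ i) = Hecke.σ (Fin.castLE h i) := by
  rw [Hecke.σ, Hecke.ιle, RingQuot.liftAlgHom_mkAlgHom_apply, FreeAlgebra.lift_ι_apply]

lemma Hecke.ιle_ιle {l m : ℕ} (h₁ : l ≤ m) (h₂ : m ≤ n) (u : Hecke C z l) :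
    Hecke.ιle h₂ (Hecke.ιle h₁ u) = Hecke.ιle (h₁.trans h₂) u := by
  have : (Hecke.ιle (z := z) h₂).comp (Hecke.ιle h₁) = Hecke.ιle (h₁.trans h₂) := by
    apply Hecke.hom_ext
    intro i
    simp only [AlgHom.comp_apply, Hecke.ιle_σ]
    exact congrArg _ (Fin.ext rfl)
  exact DFunLike.congr_fun this u

lemma Hecke.ιle_self (h : n ≤ n) (u : Hecke C z n) : Hecke.ιle h u = u := by
  have : (Hecke.ιle (z := z) h) = AlgHom.id C (Hecke C z n) := by
    apply Hecke.hom_ext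
    intro i
    simp only [AlgHom.id_apply, Hecke.ιle_σ]
    exact congrArg _ (Fin.ext rfl)
  rw [this, AlgHom.id_apply]

lemma Hecke.ιle_mul_σ {l : ℕ} (h : l ≤ n) (i : Fin n) (hi : l + 1 ≤ (i : ℕ))
    (u : Hecke C z l) :
    Hecke.ιle h u * Hecke.σ i = Hecke.σ i * Hecke.ιle h u := by
  obtain ⟨x, rfl⟩ := RingQuot.mkAlgHom_surjective C _ u
  induction x using FreeAlgebra.induction with
  | grade0 r => rw [AlgHom.commutes, AlgHom.commutes]; exact Algebra.commutes r _
  | grade1 i' =>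
      rw [show RingQuot.mkAlgHom C (HeckeRel C z l) (FreeAlgebra.ι C i') = Hecke.σ i' from rfl,
        Hecke.ιle_σ]
      exact Hecke.σ_comm (Fin.castLE h i') i (by simp; omega)
  | mul a b ha hb =>
      simp only [map_mul]
      rw [mul_assoc, hb, ← mul_assoc, ha, mul_assoc]
  | add a b ha hb =>
      simp only [map_add, add_mul, mul_add, ha, hb]

lemma Hecke.σ_quad' (i : Fin n) (x : Hecke C z n) :
    Hecke.σ (z := z) i * (Hecke.σ i * x) = x + z • (Hecke.σ i * x) := by
  rw [← mul_assoc, Hecke.σ_quad, add_mul, one_mul, smul_mul_assoc]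

/-- Normal-form words in the Hecke algebra. -/
inductive Hecke.NF {C : Type} [CommRing C] {z : C} : ∀ j : ℕ, Hecke C z j → Prop
  | one : Hecke.NF 0 1
  | lift {j : ℕ} {u : Hecke C z j} : Hecke.NF j u →
      Hecke.NF (j + 1) (Hecke.ιle (Nat.le_succ j) u)
  | mulσ {j : ℕ} {x y : Hecke C z j} : Hecke.NF j x → Hecke.NF j y →
      Hecke.NF (j + 1)
        (Hecke.ιle (Nat.le_succ j) x * Hecke.σ (Fin.last j) * Hecke.ιle (Nat.le_succ j) y)

/-- The span of normal-form words with scalars from `S`. -/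
inductive Hecke.Span {C : Type} [CommRing C] {z : C} (S : Set C) (j : ℕ) :
    Hecke C z j → Prop
  | ofNF {u : Hecke C z j} : Hecke.NF j u → Hecke.Span S j u
  | zero : Hecke.Span S j 0
  | add {u v : Hecke C z j} : Hecke.Span S j u → Hecke.Span S j v → Hecke.Span S j (u + v)
  | smul {u : Hecke C z j} (c : C) (hc : c ∈ S) : Hecke.Span S j u → Hecke.Span S j (c • u)

lemma Hecke.NF.one' {C : Type} [CommRing C] {z : C} : ∀ j : ℕ, Hecke.NF (C := C) (z := z) j 1
  | 0 => Hecke.NF.one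
  | (j + 1) => by
      have := Hecke.NF.lift (Hecke.NF.one' (C := C) (z := z) j)
      rwa [map_one] at this

lemma Hecke.NF.σ_last {C : Type} [CommRing C] {z : C} (j : ℕ) :
    Hecke.NF (C := C) (z := z) (j + 1) (Hecke.σ (Fin.last j)) := by
  have := Hecke.NF.mulσ (Hecke.NF.one' (C := C) (z := z) j) (Hecke.NF.one' j)
  rwa [map_one, one_mul, mul_one] at this

section SpanLemmas

variable {C : Type} [CommRing C] {z : C} {S : Set C} {j : ℕ}

lemma Hecke.Span.liftStep {u : Hecke C z j} (hu : Hecke.Span S j u) :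
    Hecke.Span (z := z) S (j + 1) (Hecke.ιle (Nat.le_succ j) u) := by
  induction hu with
  | ofNF h => exact .ofNF h.lift
  | zero => rw [map_zero]; exact .zero
  | add _ _ ih1 ih2 => rw [map_add]; exact .add ih1 ih2
  | smul c hc _ ih => rw [map_smul]; exact .smul c hc ih

lemma Hecke.Span.le {u : Hecke C z j} (hu : Hecke.Span S j u) :
    ∀ {m : ℕ} (h : j ≤ m), Hecke.Span (z := z) S m (Hecke.ιle h u) := by
  intro m h
  induction m, h using Nat.le_induction with
  | base => rw [Hecke.ιle_self]; exact hu
  | succ m hm ih =>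
      rw [← Hecke.ιle_ιle hm (Nat.le_succ m)]
      exact ih.liftStep

lemma Hecke.Span.neg (hS : (-1 : C) ∈ S) {u : Hecke C z j} (hu : Hecke.Span S j u) :
    Hecke.Span S j (-u) := by
  rw [← neg_one_smul C u]
  exact hu.smul (-1) hS

lemma Hecke.Span.sub (hS : (-1 : C) ∈ S) {u v : Hecke C z j}
    (hu : Hecke.Span S j u) (hv : Hecke.Span S j v) : Hecke.Span S j (u - v) := by
  rw [sub_eq_add_neg]
  exact hu.add (hv.neg hS)

lemma Hecke.Span.sandwich {u v : Hecke C z j}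
    (hu : Hecke.Span S j u) (hv : Hecke.Span S j v) :
    Hecke.Span (z := z) S (j + 1)
      (Hecke.ιle (Nat.le_succ j) u * Hecke.σ (Fin.last j) * Hecke.ιle (Nat.le_succ j) v) := by
  induction hu with
  | ofNF h1 =>
      induction hv with
      | ofNF h2 => exact .ofNF (h1.mulσ h2)
      | zero => rw [map_zero, mul_zero]; exact .zero
      | add _ _ ih1 ih2 => rw [map_add, mul_add]; exact .add ih1 ih2
      | smul c hc _ ih => rw [map_smul, mul_smul_comm]; exact .smul c hc ih
  | zero => rw [map_zero, zero_mul, zero_mul]; exact .zero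
  | add _ _ ih1 ih2 => rw [map_add, add_mul, add_mul]; exact .add ih1 ih2
  | smul c hc _ ih => rw [map_smul, smul_mul_assoc, smul_mul_assoc]; exact .smul c hc ih

end SpanLemmas

section MulLemmas

variable {C : Type} [CommRing C] {z : C} {S : Set C}

lemma Hecke.ιle_mul_σ' {l n : ℕ} (h : l ≤ n) (i : Fin n) (hi : l + 1 ≤ (i : ℕ))
    (u : Hecke C z l) (y : Hecke C z n) :
    Hecke.ιle h u * (Hecke.σ i * y) = Hecke.σ i * (Hecke.ιle h u * y) := by
  rw [← mul_assoc, Hecke.ιle_mul_σ h i hi, mul_assoc]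

lemma Hecke.σ_mul_ιle' {l n : ℕ} (h : l ≤ n) (i : Fin n) (hi : l + 1 ≤ (i : ℕ))
    (u : Hecke C z l) (y : Hecke C z n) :
    Hecke.σ i * (Hecke.ιle h u * y) = Hecke.ιle h u * (Hecke.σ i * y) :=
  (Hecke.ιle_mul_σ' h i hi u y).symm

lemma Hecke.σ_braid' {n : ℕ} (i j : Fin n) (h : (j : ℕ) = (i : ℕ) + 1) (x : Hecke C z n) :
    Hecke.σ (z := z) i * (Hecke.σ j * (Hecke.σ i * x))
      = Hecke.σ j * (Hecke.σ i * (Hecke.σ j * x)) := by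
  rw [← mul_assoc, ← mul_assoc, Hecke.σ_braid i j h, mul_assoc, mul_assoc]

lemma Hecke.Span.sandwich2 (hz : z ∈ S) {j : ℕ}
    (mulIH : ∀ u v : Hecke C z j,
      Hecke.Span S j u → Hecke.Span S j v → Hecke.Span S j (u * v))
    {a w d : Hecke C z j} (ha : Hecke.Span S j a) (hw : Hecke.Span S j w)
    (hd : Hecke.Span S j d) :
    Hecke.Span (z := z) S (j + 1)
      (Hecke.ιle (Nat.le_succ j) a * Hecke.σ (Fin.last j) * Hecke.ιle (Nat.le_succ j) w *
        Hecke.σ (Fin.last j) * Hecke.ιle (Nat.le_succ j) d) := by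
  induction hw with
  | zero => simp only [map_zero, mul_zero, zero_mul]; exact .zero
  | add _ _ ih1 ih2 => simp only [map_add, mul_add, add_mul]; exact .add ih1 ih2
  | smul c hc _ ih => simp only [map_smul, mul_smul_comm, smul_mul_assoc]; exact .smul c hc ih
  | ofNF hnf =>
    cases hnf with
    | one =>
        rw [map_one, mul_one, mul_assoc (Hecke.ιle (Nat.le_succ 0) a), Hecke.σ_quad]
        rw [mul_add, mul_one, mul_smul_comm, add_mul, smul_mul_assoc]
        refine .add ?_ (.smul z hz (ha.sandwich hd))
        rw [← map_mul]
        exact (mulIH a d ha hd).liftStep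
    | @lift j'' w' hw' =>
        have hcomm : (j'' : ℕ) + 1 ≤ ((Fin.last (j'' + 1)) : ℕ) := by simp
        have H1 : Hecke.Span (z := z) S (j'' + 1)
            (a * Hecke.ιle (Nat.le_succ j'') w' * d) :=
          mulIH _ _ (mulIH _ _ ha ((Hecke.Span.ofNF hw').liftStep)) hd
        have H2 : Hecke.Span (z := z) S (j'' + 1)
            (a * Hecke.ιle (Nat.le_succ j'') w') :=
          mulIH _ _ ha ((Hecke.Span.ofNF hw').liftStep)
        have C1 := H1.liftStep
        have C2 := (Hecke.Span.sandwich H2 hd).smul z hz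
        have C3 := C1.add C2
        simp only [map_mul, Hecke.ιle_ιle, mul_assoc] at C3 ⊢
        rw [Hecke.ιle_mul_σ' _ _ hcomm] at C3
        rw [Hecke.ιle_mul_σ' _ _ hcomm, Hecke.σ_quad', mul_add, mul_smul_comm]
        exact C3
    | @mulσ j'' e f he hf =>
        have hE : (j'' : ℕ) + 1 ≤ ((Fin.last (j'' + 1)) : ℕ) := by simp
        have hE2 : (j'' : ℕ) + 1 + 1 ≤ ((Fin.last (j'' + 1)) : ℕ) + 1 := by simp
        have hbr : ((Fin.last (j'' + 1)) : ℕ)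
            = ((Fin.castLE (Nat.le_succ (j'' + 1)) (Fin.last j'')) : ℕ) + 1 := by simp
        have hu1 : Hecke.Span (z := z) S (j'' + 1)
            (a * (Hecke.ιle (Nat.le_succ j'') e * Hecke.σ (Fin.last j''))) :=
          mulIH _ _ ha (mulIH _ _ ((Hecke.Span.ofNF he).liftStep)
            (.ofNF (Hecke.NF.σ_last j'')))
        have hv1 : Hecke.Span (z := z) S (j'' + 1)
            (Hecke.σ (Fin.last j'') * (Hecke.ιle (Nat.le_succ j'') f * d)) :=
          mulIH _ _ (.ofNF (Hecke.NF.σ_last j''))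
            (mulIH _ _ ((Hecke.Span.ofNF hf).liftStep) hd)
        have K := Hecke.Span.sandwich hu1 hv1
        simp only [map_mul, Hecke.ιle_σ, Hecke.ιle_ιle, mul_assoc] at K ⊢
        rw [Hecke.ιle_mul_σ' _ _ hE f, Hecke.σ_mul_ιle' _ _ hE e,
          ← Hecke.σ_braid' _ _ hbr]
        exact K

end MulLemmas

theorem Hecke.Span.mul {C : Type} [CommRing C] {z : C} {S : Set C} (hz : z ∈ S) :
    ∀ (j : ℕ) (u v : Hecke C z j),
      Hecke.Span S j u → Hecke.Span S j v → Hecke.Span S j (u * v) := by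
  intro j
  induction j using Nat.strong_induction_on with
  | _ j IH =>
    intro u v hu hv
    induction hu with
    | zero => rw [zero_mul]; exact .zero
    | add _ _ ih1 ih2 => rw [add_mul]; exact .add ih1 ih2
    | smul c hc _ ih => rw [smul_mul_assoc]; exact .smul c hc ih
    | @ofNF u hnfu =>
      induction hv with
      | zero => rw [mul_zero]; exact .zero
      | add _ _ ih1 ih2 => rw [mul_add]; exact .add ih1 ih2
      | smul c hc _ ih => rw [mul_smul_comm]; exact .smul c hc ih
      | @ofNF v hnfv =>
        cases hnfu with
        | one =>
            rw [one_mul]; exact .ofNF hnfv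
        | @lift j' u' hu' =>
            cases hnfv with
            | @lift _ v' hv' =>
                rw [← map_mul]
                exact (IH j' (Nat.lt_succ_self j') u' v' (.ofNF hu') (.ofNF hv')).liftStep
            | @mulσ _ c d hc hd =>
                have H : Hecke.Span (z := z) S j' (u' * c) :=
                  IH j' (Nat.lt_succ_self j') u' c (.ofNF hu') (.ofNF hc)
                have K := Hecke.Span.sandwich H (Hecke.Span.ofNF hd)
                rw [map_mul] at K
                simp only [mul_assoc] at K ⊢
                exact K
        | @mulσ j' a b ha hb =>
            cases hnfv with
            | @lift _ v' hv' =>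
                have H : Hecke.Span (z := z) S j' (b * v') :=
                  IH j' (Nat.lt_succ_self j') b v' (.ofNF hb) (.ofNF hv')
                have K := Hecke.Span.sandwich (Hecke.Span.ofNF ha) H
                rw [map_mul] at K
                simp only [mul_assoc] at K ⊢
                exact K
            | @mulσ _ c d hc hd =>
                have H : Hecke.Span (z := z) S j' (b * c) :=
                  IH j' (Nat.lt_succ_self j') b c (.ofNF hb) (.ofNF hc)
                have K := Hecke.Span.sandwich2 hz
                  (fun u v hu hv => IH j' (Nat.lt_succ_self j') u v hu hv)
                  (.ofNF ha) H (.ofNF hd)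
                rw [map_mul] at K
                simp only [mul_assoc] at K ⊢
                exact K

section Trace

variable {D : Type} [CommRing D] {z : D} {M : Type} [AddCommGroup M] [Module D M]

/-- Iterated Markov stabilization: the trace of `ι^k(x σ_j y)` picks up a factor `a`. -/
theorem hecke_trace_stab (a : D) (t : ∀ m : ℕ, Hecke D z m →ₗ[D] M)
    (htrace : ∀ (m : ℕ) (u v : Hecke D z m), t m (u * v) = t m (v * u))
    (hstab : ∀ (m : ℕ) (u v : Hecke D z m),
      t (m + 1) (Hecke.ιle (Nat.le_succ m) u * Hecke.σ (Fin.last m) *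
        Hecke.ιle (Nat.le_succ m) v) = a • t m (u * v)) :
    ∀ (d j m m' : ℕ), m = j + 1 + d → m' = j + d →
      ∀ (h1 : j + 1 ≤ m) (h2 : j ≤ m') (x y : Hecke D z j),
      t m (Hecke.ιle h1 (Hecke.ιle (Nat.le_succ j) x * Hecke.σ (Fin.last j) *
          Hecke.ιle (Nat.le_succ j) y))
        = a • t m' (Hecke.ιle h2 (x * y)) := by
  intro d
  induction d with
  | zero =>
      intro j m m' hm hm' h1 h2 x y
      have e1 : j + 1 = m := by omega
      have e2 : j = m' := by omega
      subst e1 e2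
      rw [Hecke.ιle_self, Hecke.ιle_self]
      exact hstab j x y
  | succ d IHd =>
      intro j m m' hm hm' h1 h2 x y
      have pfA : (j + 1) + 1 ≤ m := by omega
      have pfB : j + 1 ≤ m' := by omega
      have pfJ : j ≤ j + d := by omega
      have hlast : j + 1 ≤ ((Fin.last (j + 1)) : ℕ) := by simp
      have hbr2 : ((Fin.last (j + 1)) : ℕ)
          = ((Fin.castLE (Nat.le_succ (j + 1)) (Fin.last j)) : ℕ) + 1 := by simp
      -- (i) first evaluation of the auxiliary trace
      have HB := IHd j m' (j + d) (by omega) rfl pfB pfJ x y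
      have HA := IHd (j + 1) m m' (by omega) (by omega) pfA pfB
        (Hecke.ιle (Nat.le_succ j) x * Hecke.σ (Fin.last j))
        (Hecke.σ (Fin.last j) * Hecke.ιle (Nat.le_succ j) y)
      have E3 : (Hecke.ιle (Nat.le_succ j) x * Hecke.σ (z := z) (Fin.last j)) *
          (Hecke.σ (Fin.last j) * Hecke.ιle (Nat.le_succ j) y)
          = Hecke.ιle (Nat.le_succ j) (x * y)
            + z • (Hecke.ιle (Nat.le_succ j) x * Hecke.σ (Fin.last j) *
                Hecke.ιle (Nat.le_succ j) y) := by
        simp only [mul_assoc, Hecke.σ_quad', mul_add, mul_smul_comm, ← map_mul]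
      rw [E3] at HA
      simp only [map_add, map_smul, smul_add, Hecke.ιle_ιle] at HA
      rw [HB, smul_comm a z] at HA
      -- (ii) second evaluation of the auxiliary trace
      have E1 : Hecke.ιle (Nat.le_succ (j + 1))
            (Hecke.ιle (Nat.le_succ j) x * Hecke.σ (z := z) (Fin.last j)) *
            Hecke.σ (Fin.last (j + 1)) *
            Hecke.ιle (Nat.le_succ (j + 1)) (Hecke.σ (Fin.last j) *
              Hecke.ιle (Nat.le_succ j) y)
          = Hecke.σ (Fin.last (j + 1)) *
              Hecke.ιle (Nat.le_succ (j + 1)) (Hecke.ιle (Nat.le_succ j) x *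
                Hecke.σ (Fin.last j) * Hecke.ιle (Nat.le_succ j) y) *
              Hecke.σ (Fin.last (j + 1)) := by
        simp only [map_mul, Hecke.ιle_ιle, Hecke.ιle_σ, mul_assoc]
        rw [Hecke.ιle_mul_σ _ _ hlast y, Hecke.σ_mul_ιle' _ _ hlast x,
          ← Hecke.σ_braid' _ _ hbr2]
      have idA : t m (Hecke.ιle pfA
            (Hecke.ιle (Nat.le_succ (j + 1))
              (Hecke.ιle (Nat.le_succ j) x * Hecke.σ (z := z) (Fin.last j)) *
              Hecke.σ (Fin.last (j + 1)) *
              Hecke.ιle (Nat.le_succ (j + 1)) (Hecke.σ (Fin.last j) *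
                Hecke.ιle (Nat.le_succ j) y)))
          = t m (Hecke.ιle h1 (Hecke.ιle (Nat.le_succ j) x * Hecke.σ (Fin.last j) *
              Hecke.ιle (Nat.le_succ j) y))
            + z • (a • (a • t (j + d) (Hecke.ιle pfJ (x * y)))) := by
        conv_lhs => rw [E1, map_mul (Hecke.ιle pfA), map_mul (Hecke.ιle pfA),
          Hecke.ιle_σ pfA (Fin.last (j + 1))]
        rw [htrace m (Hecke.σ (Fin.castLE pfA (Fin.last (j + 1))) * _)
          (Hecke.σ (Fin.castLE pfA (Fin.last (j + 1)))), Hecke.σ_quad', map_add, map_smul]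
        rw [htrace m (Hecke.σ (Fin.castLE pfA (Fin.last (j + 1)))) _]
        rw [← Hecke.ιle_σ pfA (Fin.last (j + 1)), ← map_mul]
        have eone : Hecke.ιle (Nat.le_succ (j + 1))
              (Hecke.ιle (Nat.le_succ j) x * Hecke.σ (z := z) (Fin.last j) *
                Hecke.ιle (Nat.le_succ j) y) * Hecke.σ (Fin.last (j + 1))
            = Hecke.ιle (Nat.le_succ (j + 1))
                (Hecke.ιle (Nat.le_succ j) x * Hecke.σ (Fin.last j) *
                  Hecke.ιle (Nat.le_succ j) y) * Hecke.σ (Fin.last (j + 1)) *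
                Hecke.ιle (Nat.le_succ (j + 1)) (1 : Hecke D z (j + 1)) := by
          rw [map_one, mul_one]
        rw [eone, IHd (j + 1) m m' (by omega) (by omega) pfA pfB _ 1, mul_one, HB,
          Hecke.ιle_ιle]
      rw [idA] at HA
      exact add_right_cancel HA

end Trace

section Degree

open LaurentPolynomial

variable {K : Type} [CommRing K]

lemma lp_supp_le_iff {P : LaurentPolynomial K} {d : ℤ} :
    P.coeff.support.max ≤ (d : WithBot ℤ) ↔ ∀ i ∈ P.coeff.support, i ≤ d := by
  rw [Finset.max_le_iff]
  exact Iff.of_eq (by norm_cast)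

lemma lp_add_bound {P Q : LaurentPolynomial K} {d : ℤ}
    (hP : P.coeff.support.max ≤ (d : WithBot ℤ)) (hQ : Q.coeff.support.max ≤ (d : WithBot ℤ)) :
    (P + Q).coeff.support.max ≤ (d : WithBot ℤ) := by
  rw [lp_supp_le_iff] at hP hQ ⊢
  intro i hi
  rcases Finset.mem_union.1 (Finsupp.support_add hi) with h | h
  · exact hP i h
  · exact hQ i h

lemma lp_mul_bound {P Q : LaurentPolynomial K} {d e : ℤ}
    (hP : P.coeff.support.max ≤ (d : WithBot ℤ)) (hQ : Q.coeff.support.max ≤ (e : WithBot ℤ)) :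
    (P * Q).coeff.support.max ≤ ((d + e : ℤ) : WithBot ℤ) := by
  rw [lp_supp_le_iff] at hP hQ ⊢
  intro i hi
  rcases Finset.mem_add.1 (AddMonoidAlgebra.support_coeff_mul_subset P Q hi) with ⟨x, hx, y, hy, rfl⟩
  exact add_le_add (hP x hx) (hQ y hy)

lemma lp_single_bound (n : ℤ) (c : K) :
    (AddMonoidAlgebra.single n c : LaurentPolynomial K).coeff.support.max ≤ (n : WithBot ℤ) := by
  rw [lp_supp_le_iff]
  intro i hi
  have := Finsupp.support_single_subset hi
  simp only [Finset.mem_singleton] at this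
  omega

lemma lp_one_bound : (1 : LaurentPolynomial K).coeff.support.max ≤ ((0 : ℤ) : WithBot ℤ) := by
  rw [← LaurentPolynomial.single_zero_one_eq_one]
  exact lp_single_bound 0 1

lemma lp_T_bound : (T 1 : LaurentPolynomial K).coeff.support.max ≤ ((1 : ℤ) : WithBot ℤ) :=
  lp_single_bound 1 1

lemma lp_C_bound (c : K) :
    ((algebraMap K (LaurentPolynomial K) c)).coeff.support.max ≤ ((0 : ℤ) : WithBot ℤ) := by
  rw [← LaurentPolynomial.C_eq_algebraMap, ← LaurentPolynomial.single_eq_C]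
  exact lp_single_bound 0 c

end Degree

section Bound

open LaurentPolynomial

variable {K : Type} [CommRing K]

/-- The degree bound for the transverse Markov trace on spans of normal forms. -/
theorem hecke_trace_degree_bound (z : LaurentPolynomial K)
    (hzS : z ∈ Set.range (algebraMap K (LaurentPolynomial K)))
    (t : ∀ m : ℕ, Hecke (LaurentPolynomial K) z m →ₗ[LaurentPolynomial K]
      (ℕ →₀ LaurentPolynomial K))
    (htrace : ∀ (m : ℕ) (u v : Hecke (LaurentPolynomial K) z m), t m (u * v) = t m (v * u))
    (hstab : ∀ (m : ℕ) (u v : Hecke (LaurentPolynomial K) z m),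
      t (m + 1) (Hecke.ιle (Nat.le_succ m) u * Hecke.σ (Fin.last m) *
          Hecke.ιle (Nat.le_succ m) v) = (T 1 : LaurentPolynomial K) • t m (u * v))
    (hone : ∀ m : ℕ, t m 1 = Finsupp.single m 1) :
    ∀ (j : ℕ) (m : ℕ) (h : j ≤ m) (u : Hecke (LaurentPolynomial K) z j),
      Hecke.Span (Set.range (algebraMap K (LaurentPolynomial K))) j u →
      ∀ k : ℕ, ((t m (Hecke.ιle h u)) k).coeff.support.max
        ≤ (((m : ℤ) - (k : ℤ) : ℤ) : WithBot ℤ) := by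
  intro j
  induction j using Nat.strong_induction_on with
  | _ j IH =>
    intro m h u hu
    induction hu with
    | zero =>
        intro k
        rw [map_zero, map_zero]
        simp
    | add _ _ ih1 ih2 =>
        intro k
        rw [map_add, map_add]
        exact lp_add_bound (ih1 k) (ih2 k)
    | smul c hc _ ih =>
        intro k
        obtain ⟨c0, rfl⟩ := hc
        rw [map_smul, map_smul]
        have := lp_mul_bound (lp_C_bound c0) (ih k)
        rw [zero_add] at this
        simpa using this
    | ofNF hnf =>
        cases hnf with
        | one =>
            intro k
            rw [map_one, hone]
            rcases eq_or_ne m k with rfl | hne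
            · rw [Finsupp.single_eq_same]
              have := lp_one_bound (K := K)
              simpa using this
            · rw [Finsupp.single_eq_of_ne hne.symm]
              simp
        | @lift j' u' hu' =>
            rw [Hecke.ιle_ιle]
            exact IH j' (Nat.lt_succ_self j') m (le_trans (Nat.le_succ j') h) u' (.ofNF hu')
        | @mulσ j' x y hx hy =>
            intro k
            have hst := hecke_trace_stab (T 1 : LaurentPolynomial K) t htrace hstab
              (m - (j' + 1)) j' m (m - 1) (by omega) (by omega) h (by omega) x y
            rw [hst]
            have hxy := Hecke.Span.mul hzS j' x y (.ofNF hx) (.ofNF hy)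
            have hb := IH j' (Nat.lt_succ_self j') (m - 1) (by omega) (x * y) hxy k
            rw [Finsupp.smul_apply, smul_eq_mul]
            have := lp_mul_bound lp_T_bound hb
            have he : (1 : ℤ) + (((m - 1 : ℕ) : ℤ) - (k : ℤ)) = (m : ℤ) - (k : ℤ) := by
              omega
            rwa [he] at this

end Bound

end Aux


open LaurentPolynomial in
/-- Let `(τ_n)` be the transverse Markov trace on the Hecke algebras
over `R = C[a^{±1}]` (Laurent polynomials in the framing variable `a = T 1` over the
ring `C` containing `q` with `q − q⁻¹` invertible) with generic parameters `{α_k}`: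
its values are recorded in the free module `ℕ →₀ R`, with `τ_n(1) = α_n` the `n`-th basis
vector, trace property, and positive stabilization with scalar `a = T 1`.
Then for every braid word `w` on `n` strands with image `u` in `H_n`, every coefficient
`P_k` of `τ_n(u) = Σ P_k α_k` satisfies `deg_a(P_k) ≤ n − k`, i.e.
`e(τ_n(u)) = min{−deg_a(P_k) − k} ≥ −n`. -/
theorem hecke_transverse_trace_mfw_inequality (C : Type) [CommRing C]
    (q zc : Cˣ) (hz : (zc : C) = (q : C) - ((q⁻¹ : Cˣ) : C))
    (z : LaurentPolynomial C) (hzR : z = algebraMap C (LaurentPolynomial C) (zc : C))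
    (t : ∀ m : ℕ, Hecke (LaurentPolynomial C) z m →ₗ[LaurentPolynomial C] (ℕ →₀ LaurentPolynomial C))
    (htrace : ∀ (m : ℕ) (u v : Hecke (LaurentPolynomial C) z m), t m (u * v) = t m (v * u))
    (hstab : ∀ (m : ℕ) (u v : Hecke (LaurentPolynomial C) z m),
      t (m + 1) (Hecke.ιle (Nat.le_succ m) u * Hecke.σ (Fin.last m) *
          Hecke.ιle (Nat.le_succ m) v) = (T 1 : LaurentPolynomial C) • t m (u * v))
    (hone : ∀ m : ℕ, t m 1 = Finsupp.single m 1) :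
    ∀ (m : ℕ) (w : List (Fin m × Bool)) (k : ℕ),
      (((t m ((w.map fun p =>
            if p.2 then Hecke.σ p.1 else Hecke.σ p.1 - z • 1).prod)) k).coeff.support.max
          : WithBot ℤ)
        ≤ (((m : ℤ) - (k : ℤ) : ℤ) : WithBot ℤ) := by
  intro m w k
  have hzS : z ∈ Set.range (algebraMap C (LaurentPolynomial C)) := ⟨(zc : C), hzR.symm⟩
  set S := Set.range (algebraMap C (LaurentPolynomial C)) with hS
  have hneg : (-1 : LaurentPolynomial C) ∈ S := ⟨-1, by simp⟩
  have hσ : ∀ i : Fin m, Hecke.Span (z := z) S m (Hecke.σ i) := by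
    intro i
    have h1 : (i : ℕ) + 1 ≤ m := i.isLt
    have := (Hecke.Span.ofNF (S := S)
      (Hecke.NF.σ_last (C := LaurentPolynomial C) (z := z) (i : ℕ))).le h1
    rw [Hecke.ιle_σ] at this
    have e : Fin.castLE h1 (Fin.last (i : ℕ)) = i := by ext; simp
    rwa [e] at this
  have hletter : ∀ p : Fin m × Bool,
      Hecke.Span (z := z) S m (if p.2 then Hecke.σ p.1 else Hecke.σ p.1 - z • 1) := by
    intro p
    rcases p with ⟨i, b⟩
    cases b
    · simp only [Bool.false_eq_true, if_false]
      refine Hecke.Span.sub hneg (hσ i) ?_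
      exact Hecke.Span.smul z hzS (.ofNF (Hecke.NF.one' m))
    · simpa using hσ i
  have hw : Hecke.Span (z := z) S m ((w.map fun p =>
      if p.2 then Hecke.σ p.1 else Hecke.σ p.1 - z • 1).prod) := by
    induction w with
    | nil => simpa using Hecke.Span.ofNF (Hecke.NF.one' m)
    | cons hd tl ih =>
        rw [List.map_cons, List.prod_cons]
        exact Hecke.Span.mul hzS m _ _ (hletter hd) ih
  have hb := hecke_trace_degree_bound z hzS t htrace hstab hone m m (le_refl m) _ hw k
  rwa [Hecke.ιle_self] at hb

end
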